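/- arXiv:math/0111044 — 2 statements merged into one kernel-verified Lean document; each statement's English description precedes it below -/
import Mathlib

section
/- Let (R, m) be a Noetherian local ring and I ⊆ m² an ideal of R. If the canonical projection R → R/I admits a ring homomorphism section, then I = 0. -/
/-- Let `(R, m)` be a Noetherian local ring and `I ⊆ m²` an ideal. If the canonical
projection `R → R/I` admits a ring homomorphism section, then `I = 0`. -/
theorem stmt_0 (R : Type*) [CommRing R] [IsNoetherianRing R] [IsLocalRing R]
    (I : Ideal R) (hI : I ≤ (IsLocalRing.maximalIdeal R) ^ 2)
    (s : R ⧸ I →+* R) (hs : (Ideal.Quotient.mk I).comp s = RingHom.id (R ⧸ I)) :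
    I = ⊥ := by
  set m := IsLocalRing.maximalIdeal R with hm
  have hmk : ∀ q : R ⧸ I, Ideal.Quotient.mk I (s q) = q := fun q => RingHom.congr_fun hs q
  have hm2 : I ≤ m := le_trans hI (Ideal.pow_le_self two_ne_zero)
  -- s of the image of an element of m lands in m
  have hsm : ∀ b ∈ m, s (Ideal.Quotient.mk I b) ∈ m := by
    intro b hb
    by_contra h
    have hu : IsUnit (s (Ideal.Quotient.mk I b)) :=
      not_not.mp (fun hn => h ((IsLocalRing.mem_maximalIdeal _).mpr (mem_nonunits_iff.mpr hn)))
    have hub : IsUnit (Ideal.Quotient.mk I b) := by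
      have := hu.map (Ideal.Quotient.mk I)
      rwa [hmk] at this
    obtain ⟨c, hc⟩ := isUnit_iff_exists_inv.mp hub
    have hbc : b * s c - 1 ∈ I := by
      rw [← Ideal.Quotient.eq_zero_iff_mem]
      rw [map_sub, map_mul, hmk, hc, map_one, sub_self]
    have h1 : (1 : R) ∈ m := by
      have he : (1 : R) = b * s c - (b * s c - 1) := by ring
      rw [he]
      exact Submodule.sub_mem _ (Ideal.mul_mem_right _ _ hb) (hm2 hbc)
    exact IsLocalRing.mem_maximalIdeal 1 |>.mp h1 isUnit_one
  -- elements of I lie in I-part computations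
  have heI : ∀ a : R, a - s (Ideal.Quotient.mk I a) ∈ I := by
    intro a
    rw [← Ideal.Quotient.eq_zero_iff_mem]
    simp [hmk]
  have key : ∀ x ∈ m * m, x - s (Ideal.Quotient.mk I x) ∈ m * I := by
    intro x hx
    refine Submodule.mul_induction_on hx ?_ ?_
    · intro a ha b hb
      have hea := heI a
      have heb := heI b
      have hrw : a * b - s (Ideal.Quotient.mk I (a * b)) =
          s (Ideal.Quotient.mk I b) * (a - s (Ideal.Quotient.mk I a)) +
            a * (b - s (Ideal.Quotient.mk I b)) := by
        rw [map_mul, map_mul]; ring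
      rw [hrw]
      exact Submodule.add_mem _
        (Ideal.mul_mem_mul (hsm b hb) hea)
        (Ideal.mul_mem_mul ha heb)
    · intro a b ha hb
      have hrw : a + b - s (Ideal.Quotient.mk I (a + b)) =
          (a - s (Ideal.Quotient.mk I a)) + (b - s (Ideal.Quotient.mk I b)) := by
        rw [map_add, map_add]; ring
      rw [hrw]
      exact Submodule.add_mem _ ha hb
  have hle : I ≤ m • I := by
    intro x hx
    have hx2 : x ∈ m * m := by
      have := hI hx; rwa [pow_two] at this
    have := key x hx2
    rw [Ideal.Quotient.eq_zero_iff_mem.mpr hx, map_zero, sub_zero] at this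
    rwa [Ideal.smul_eq_mul]
  exact Submodule.eq_bot_of_le_smul_of_le_jacobson_bot m I
    (IsNoetherian.noetherian I) hle (IsLocalRing.maximalIdeal_le_jacobson ⊥)
end

section
/- Fix n ≥ 1 and let S ⊆ ℕ^{2n} be the submonoid of exponent vectors a with Σ_{i=1}^{n} (a_{2i-1} + 2 a_{2i}) ≡ 0 (mod 3). Then S is generated as a monoid by the elements e*_{2i} + e*_{2j-1} (i, j ∈ {1,…,n}), e*_{2i} + e*_{2j} + e*_{2k} (i, j, k ∈ {1,…,n}), and e*_{2i-1} + e*_{2j-1} + e*_{2k-1} (i, j, k ∈ {1,…,n}), where e*_1, …, e*_{2n} is the standard basis of ℕ^{2n}. -/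
private def fw (n : ℕ) (a : Fin (2 * n) → ℕ) : ℕ :=
  ∑ i : Fin n, (a ⟨2 * i.1, by omega⟩ + 2 * a ⟨2 * i.1 + 1, by omega⟩)

private lemma fw_add (n : ℕ) (a b : Fin (2 * n) → ℕ) : fw n (a + b) = fw n a + fw n b := by
  unfold fw
  rw [← Finset.sum_add_distrib]
  exact Finset.sum_congr rfl fun i _ => by simp [Pi.add_apply]; ring

private lemma fw_single_even (n : ℕ) (j : Fin n) :
    fw n (Pi.single ⟨2 * j.1, by omega⟩ 1) = 1 := by
  unfold fw
  rw [Finset.sum_eq_single j]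
  · rw [Pi.single_eq_same, Pi.single_eq_of_ne (by simp only [ne_eq, Fin.mk.injEq]; omega)]
    ring
  · intro i _ hij
    have hv : i.1 ≠ j.1 := fun h => hij (Fin.ext h)
    rw [Pi.single_eq_of_ne (by simp only [ne_eq, Fin.mk.injEq]; omega),
        Pi.single_eq_of_ne (by simp only [ne_eq, Fin.mk.injEq]; omega)]
    ring
  · intro h; exact absurd (Finset.mem_univ j) h

private lemma fw_single_odd (n : ℕ) (j : Fin n) :
    fw n (Pi.single ⟨2 * j.1 + 1, by omega⟩ 1) = 2 := by
  unfold fw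
  rw [Finset.sum_eq_single j]
  · rw [Pi.single_eq_same, Pi.single_eq_of_ne (by simp only [ne_eq, Fin.mk.injEq]; omega)]
  · intro i _ hij
    have hv : i.1 ≠ j.1 := fun h => hij (Fin.ext h)
    rw [Pi.single_eq_of_ne (by simp only [ne_eq, Fin.mk.injEq]; omega),
        Pi.single_eq_of_ne (by simp only [ne_eq, Fin.mk.injEq]; omega)]
    ring
  · intro h; exact absurd (Finset.mem_univ j) h

private lemma fw_split (n : ℕ) (a : Fin (2 * n) → ℕ) (p : Fin (2 * n)) (hp : 1 ≤ a p) :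
    ∃ b : Fin (2 * n) → ℕ, a = Pi.single p 1 + b ∧ ∀ q, q ≠ p → b q = a q := by
  refine ⟨fun q => a q - (Pi.single p 1 : Fin (2 * n) → ℕ) q, ?_, ?_⟩
  · funext q
    by_cases h : q = p
    · subst h; simp only [Pi.add_apply, Pi.single_eq_same]; omega
    · simp [Pi.single_eq_of_ne h]
  · intro q hq; simp [Pi.single_eq_of_ne hq]

private lemma exists_even_pos (n : ℕ) (a : Fin (2 * n) → ℕ)
    (h0 : ∀ i : Fin n, a ⟨2 * i.1 + 1, by omega⟩ = 0)
    (h : 1 ≤ fw n a) : ∃ i : Fin n, 1 ≤ a ⟨2 * i.1, by omega⟩ := by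
  by_contra hc
  push_neg at hc
  have hz : fw n a = 0 := Finset.sum_eq_zero fun i _ => by
    have h1 := hc i; have h2 := h0 i; omega
  omega

private lemma exists_odd_pos (n : ℕ) (a : Fin (2 * n) → ℕ)
    (h0 : ∀ i : Fin n, a ⟨2 * i.1, by omega⟩ = 0)
    (h : 1 ≤ fw n a) : ∃ i : Fin n, 1 ≤ a ⟨2 * i.1 + 1, by omega⟩ := by
  by_contra hc
  push_neg at hc
  have hz : fw n a = 0 := Finset.sum_eq_zero fun i _ => by
    have h1 := hc i; have h2 := h0 i; omega
  omega

private lemma mem_closure_of_fw (n : ℕ) (G : Set (Fin (2 * n) → ℕ))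
    (hG : G = {x | (∃ i j : Fin n, x =
        Pi.single ⟨2 * i.1 + 1, by omega⟩ 1 +
        Pi.single ⟨2 * j.1, by omega⟩ 1) ∨
      (∃ i j k : Fin n, x =
        Pi.single ⟨2 * i.1 + 1, by omega⟩ 1 +
        Pi.single ⟨2 * j.1 + 1, by omega⟩ 1 +
        Pi.single ⟨2 * k.1 + 1, by omega⟩ 1) ∨
      (∃ i j k : Fin n, x =
        Pi.single ⟨2 * i.1, by omega⟩ 1 +
        Pi.single ⟨2 * j.1, by omega⟩ 1 +
        Pi.single ⟨2 * k.1, by omega⟩ 1)}) :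
    ∀ N (a : Fin (2 * n) → ℕ), fw n a = N → N % 3 = 0 →
      a ∈ AddSubmonoid.closure G := by
  subst hG
  intro N
  induction N using Nat.strong_induction_on with
  | _ N ih =>
    intro a hfa hmod
    rcases Nat.eq_zero_or_pos N with h0 | hpos
    · subst h0
      have hz := Finset.sum_eq_zero_iff.mp hfa
      have ha0 : a = 0 := by
        funext q
        rcases q with ⟨v, hv⟩
        rcases Nat.even_or_odd v with ⟨i, hi⟩ | ⟨i, hi⟩
        · have hin : i < n := by omega
          have h := hz ⟨i, hin⟩ (Finset.mem_univ _)
          simp only [Fin.val_mk] at h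
          have he : (⟨v, hv⟩ : Fin (2 * n)) = ⟨2 * i, by omega⟩ := by
            simp only [Fin.mk.injEq]; omega
          rw [he]; simp only [Pi.zero_apply]; omega
        · have hin : i < n := by omega
          have h := hz ⟨i, hin⟩ (Finset.mem_univ _)
          simp only [Fin.val_mk] at h
          have he : (⟨v, hv⟩ : Fin (2 * n)) = ⟨2 * i + 1, by omega⟩ := by
            simp only [Fin.mk.injEq]; omega
          rw [he]; simp only [Pi.zero_apply]; omega
      rw [ha0]; exact zero_mem _
    · have hN3 : 3 ≤ N := by omega
      by_cases hodd : ∃ i : Fin n, 1 ≤ a ⟨2 * i.1 + 1, by omega⟩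
      · by_cases hevenx : ∃ j : Fin n, 1 ≤ a ⟨2 * j.1, by omega⟩
        · -- mixed case: degree-2 generator
          obtain ⟨i, hi⟩ := hodd
          obtain ⟨b, hb, hbq⟩ := fw_split n a _ hi
          obtain ⟨j, hj⟩ := hevenx
          have hbj : 1 ≤ b ⟨2 * j.1, by omega⟩ := by
            rw [hbq _ (by simp only [ne_eq, Fin.mk.injEq]; omega)]; exact hj
          obtain ⟨c, hc, hcq⟩ := fw_split n b _ hbj
          have h1 : fw n a = 2 + fw n b := by rw [hb, fw_add, fw_single_odd]
          have h2 : fw n b = 1 + fw n c := by rw [hc, fw_add, fw_single_even]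
          rw [hb, hc, ← add_assoc]
          exact AddSubmonoid.add_mem _
            (AddSubmonoid.subset_closure (Or.inl ⟨i, j, rfl⟩))
            (ih (N - 3) (by omega) c (by omega) (by omega))
        · -- evens all zero: degree-3 odd generator
          push_neg at hevenx
          have haev : ∀ j : Fin n, a ⟨2 * j.1, by omega⟩ = 0 := by
            intro j; have := hevenx j; omega
          have hNeven : N = 2 * ∑ i : Fin n, a ⟨2 * i.1 + 1, by omega⟩ := by
            rw [← hfa]; unfold fw
            rw [Finset.mul_sum]
            refine Finset.sum_congr rfl fun i _ => ?_
            have h := haev i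
            omega
          have hN6 : 6 ≤ N := by omega
          obtain ⟨i₁, hi₁⟩ := hodd
          obtain ⟨b, hb, hbq⟩ := fw_split n a _ hi₁
          have h1 : fw n a = 2 + fw n b := by rw [hb, fw_add, fw_single_odd]
          have hbev : ∀ j : Fin n, b ⟨2 * j.1, by omega⟩ = 0 := fun j => by
            rw [hbq _ (by simp only [ne_eq, Fin.mk.injEq]; omega)]; exact haev j
          obtain ⟨i₂, hi₂⟩ := exists_odd_pos n b hbev (by omega)
          obtain ⟨c, hc, hcq⟩ := fw_split n b _ hi₂
          have h2 : fw n b = 2 + fw n c := by rw [hc, fw_add, fw_single_odd]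
          have hcev : ∀ j : Fin n, c ⟨2 * j.1, by omega⟩ = 0 := fun j => by
            rw [hcq _ (by simp only [ne_eq, Fin.mk.injEq]; omega)]; exact hbev j
          obtain ⟨i₃, hi₃⟩ := exists_odd_pos n c hcev (by omega)
          obtain ⟨d, hd, hdq⟩ := fw_split n c _ hi₃
          have h3 : fw n c = 2 + fw n d := by rw [hd, fw_add, fw_single_odd]
          rw [hb, hc, hd, ← add_assoc, ← add_assoc]
          exact AddSubmonoid.add_mem _
            (AddSubmonoid.subset_closure (Or.inr (Or.inl ⟨i₁, i₂, i₃, rfl⟩)))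
            (ih (N - 6) (by omega) d (by omega) (by omega))
      · -- odds all zero: degree-3 even generator
        push_neg at hodd
        have haod : ∀ i : Fin n, a ⟨2 * i.1 + 1, by omega⟩ = 0 := by
          intro i; have := hodd i; omega
        obtain ⟨i₁, hi₁⟩ := exists_even_pos n a haod (by omega)
        obtain ⟨b, hb, hbq⟩ := fw_split n a _ hi₁
        have h1 : fw n a = 1 + fw n b := by rw [hb, fw_add, fw_single_even]
        have hbod : ∀ i : Fin n, b ⟨2 * i.1 + 1, by omega⟩ = 0 := fun i => by
          rw [hbq _ (by simp only [ne_eq, Fin.mk.injEq]; omega)]; exact haod i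
        obtain ⟨i₂, hi₂⟩ := exists_even_pos n b hbod (by omega)
        obtain ⟨c, hc, hcq⟩ := fw_split n b _ hi₂
        have h2 : fw n b = 1 + fw n c := by rw [hc, fw_add, fw_single_even]
        have hcod : ∀ i : Fin n, c ⟨2 * i.1 + 1, by omega⟩ = 0 := fun i => by
          rw [hcq _ (by simp only [ne_eq, Fin.mk.injEq]; omega)]; exact hbod i
        obtain ⟨i₃, hi₃⟩ := exists_even_pos n c hcod (by omega)
        obtain ⟨d, hd, hdq⟩ := fw_split n c _ hi₃
        have h3 : fw n c = 1 + fw n d := by rw [hd, fw_add, fw_single_even]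
        rw [hb, hc, hd, ← add_assoc, ← add_assoc]
        exact AddSubmonoid.add_mem _
          (AddSubmonoid.subset_closure (Or.inr (Or.inr ⟨i₁, i₂, i₃, rfl⟩)))
          (ih (N - 3) (by omega) d (by omega) (by omega))


/-- The submonoid `S ⊆ ℕ^{2n}` of exponent vectors `a` with
`Σᵢ (a_{2i-1} + 2 a_{2i}) ≡ 0 (mod 3)` is generated as a monoid by the elements
`e*_{2i} + e*_{2j-1}`, `e*_{2i} + e*_{2j} + e*_{2k}` and `e*_{2i-1} + e*_{2j-1} + e*_{2k-1}`.
(0-based: `e*_{2i}` is `Pi.single ⟨2i+1⟩ 1` and `e*_{2i-1}` is `Pi.single ⟨2i⟩ 1`.) -/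
theorem stmt_5 (n : ℕ) (hn : 1 ≤ n)
    (G : Set (Fin (2 * n) → ℕ))
    (hG : G = {x | (∃ i j : Fin n, x =
        Pi.single ⟨2 * i.1 + 1, by have := i.2; omega⟩ 1 +
        Pi.single ⟨2 * j.1, by have := j.2; omega⟩ 1) ∨
      (∃ i j k : Fin n, x =
        Pi.single ⟨2 * i.1 + 1, by have := i.2; omega⟩ 1 +
        Pi.single ⟨2 * j.1 + 1, by have := j.2; omega⟩ 1 +
        Pi.single ⟨2 * k.1 + 1, by have := k.2; omega⟩ 1) ∨
      (∃ i j k : Fin n, x =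
        Pi.single ⟨2 * i.1, by have := i.2; omega⟩ 1 +
        Pi.single ⟨2 * j.1, by have := j.2; omega⟩ 1 +
        Pi.single ⟨2 * k.1, by have := k.2; omega⟩ 1)}) :
    (AddSubmonoid.closure G : Set (Fin (2 * n) → ℕ)) =
      {a | (∑ i : Fin n, (a ⟨2 * i.1, by have := i.2; omega⟩ +
        2 * a ⟨2 * i.1 + 1, by have := i.2; omega⟩)) % 3 = 0} := by
  ext a
  simp only [SetLike.mem_coe, Set.mem_setOf_eq]
  constructor
  · intro ha
    show fw n a % 3 = 0
    induction ha using AddSubmonoid.closure_induction with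
    | mem x hx =>
      rw [hG] at hx
      rcases hx with ⟨i, j, rfl⟩ | ⟨i, j, k, rfl⟩ | ⟨i, j, k, rfl⟩ <;>
        simp [fw_add, fw_single_even, fw_single_odd]
    | zero => show fw n 0 % 3 = 0; unfold fw; simp
    | add x y _ _ hx hy => show fw n (x + y) % 3 = 0; rw [fw_add]; omega
  · intro ha
    exact mem_closure_of_fw n G hG (fw n a) a rfl ha
end
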